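/- For a finite normal-form game Γ, a strategy profile σ is an empirical equilibrium of Γ if and only if σ is a Nash equilibrium of Γ and there is a convergent sequence of interior payoff monotone strategy profiles for Γ whose pointwise limit is σ. -/

import Mathlib

open Filter Topology

section GameDefs

variable {N : Type} [Fintype N] [DecidableEq N] {A : N → Type}
  [∀ i, Fintype (A i)] [∀ i, DecidableEq (A i)]

/-- A mixed-strategy profile: each `σ i` is a probability distribution on `A i`. -/
def IsStrategy (σ : ∀ i, A i → ℝ) : Prop :=
  (∀ i a, 0 ≤ σ i a) ∧ ∀ i, ∑ a, σ i a = 1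

/-- An interior profile places positive probability on every action. -/
def Interior (σ : ∀ i, A i → ℝ) : Prop :=
  ∀ i a, 0 < σ i a

/-- Expected utility of player `i` at profile `σ`. -/
noncomputable def expUtil (u : ∀ i : N, (∀ j, A j) → ℝ) (σ : ∀ i, A i → ℝ) (i : N) : ℝ :=
  ∑ a : ∀ j, A j, u i a * ∏ j, σ j (a j)

/-- Expected utility of player `i` from playing action `ai` against `σ₋ᵢ`. -/
noncomputable def devUtil (u : ∀ i : N, (∀ j, A j) → ℝ) (σ : ∀ i, A i → ℝ)
    (i : N) (ai : A i) : ℝ :=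
  expUtil u (Function.update σ i (fun b => if b = ai then (1 : ℝ) else 0)) i

/-- Nash equilibrium. -/
def IsNash (u : ∀ i : N, (∀ j, A j) → ℝ) (σ : ∀ i, A i → ℝ) : Prop :=
  IsStrategy σ ∧ ∀ (i : N) (μ : A i → ℝ), (∀ a, 0 ≤ μ a) → (∑ a, μ a = 1) →
    expUtil u (Function.update σ i μ) i ≤ expUtil u σ i

/-- Weak payoff monotonicity: differences in behavior reveal differences in payoffs. -/
def WeaklyPayoffMonotone (u : ∀ i : N, (∀ j, A j) → ℝ) (σ : ∀ i, A i → ℝ) : Prop :=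
  IsStrategy σ ∧ ∀ (i : N) (ai bi : A i), σ i bi < σ i ai →
    devUtil u σ i bi < devUtil u σ i ai

/-- Payoff monotonicity. -/
def PayoffMonotone (u : ∀ i : N, (∀ j, A j) → ℝ) (σ : ∀ i, A i → ℝ) : Prop :=
  IsStrategy σ ∧ ∀ (i : N) (ai bi : A i),
    σ i bi ≤ σ i ai ↔ devUtil u σ i bi ≤ devUtil u σ i ai

/-- Pointwise convergence of a sequence of profiles. -/
def ConvergesTo (s : ℕ → ∀ i, A i → ℝ) (σ : ∀ i, A i → ℝ) : Prop :=
  ∀ (i : N) (ai : A i), Tendsto (fun n => s n i ai) atTop (𝓝 (σ i ai))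

/-- Empirical equilibrium: a Nash equilibrium that is the limit of weakly payoff
monotone profiles. -/
def IsEmpirical (u : ∀ i : N, (∀ j, A j) → ℝ) (σ : ∀ i, A i → ℝ) : Prop :=
  IsNash u σ ∧ ∃ s : ℕ → ∀ i, A i → ℝ,
    (∀ n, WeaklyPayoffMonotone u (s n)) ∧ ConvergesTo s σ

/-- Proper equilibrium (Myerson). -/
def IsProper (u : ∀ i : N, (∀ j, A j) → ℝ) (σ : ∀ i, A i → ℝ) : Prop :=
  IsStrategy σ ∧ ∃ s : ℕ → ∀ i, A i → ℝ,
    (∀ n, IsStrategy (s n) ∧ Interior (s n) ∧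
      ∀ (i : N) (ai bi : A i),
        devUtil u (s n) i bi < devUtil u (s n) i ai →
          s n i bi ≤ (1 / (n + 1) : ℝ) * s n i ai) ∧
    ConvergesTo s σ

/-- Perfect equilibrium (Selten, in Myerson's formulation). -/
def IsPerfect (u : ∀ i : N, (∀ j, A j) → ℝ) (σ : ∀ i, A i → ℝ) : Prop :=
  IsStrategy σ ∧ ∃ s : ℕ → ∀ i, A i → ℝ,
    (∀ n, IsStrategy (s n) ∧ Interior (s n) ∧
      ∀ (i : N) (ai : A i), (1 / (n + 1) : ℝ) < s n i ai →
        ∀ bi : A i, devUtil u (s n) i bi ≤ devUtil u (s n) i ai) ∧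
    ConvergesTo s σ

/-- `bi` weakly dominates `ai` for player `i`. -/
def WeaklyDominates (u : ∀ i : N, (∀ j, A j) → ℝ) (i : N) (bi ai : A i) : Prop :=
  (∀ a : ∀ j, A j, u i (Function.update a i ai) ≤ u i (Function.update a i bi)) ∧
  ∃ a : ∀ j, A j, u i (Function.update a i ai) < u i (Function.update a i bi)

/-- Undominated Nash equilibrium. -/
def IsUndominatedNash (u : ∀ i : N, (∀ j, A j) → ℝ) (σ : ∀ i, A i → ℝ) : Prop :=
  IsNash u σ ∧ ∀ (i : N) (ai : A i), 0 < σ i ai →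
    ¬ ∃ bi : A i, WeaklyDominates u i bi ai

end GameDefs

/-- A regular quantal response function on a finite set of actions `B`:
interiority, continuity, responsiveness, and monotonicity. -/
def IsRegularQRF {B : Type} [Fintype B] [DecidableEq B]
    (p : (B → ℝ) → (B → ℝ)) : Prop :=
  (∀ x, (∀ a, 0 < p x a) ∧ ∑ a, p x a = 1) ∧
  Continuous p ∧
  (∀ (x : B → ℝ) (η : ℝ) (a : B), 0 < η →
    p x a < p (Function.update x a (x a + η)) a) ∧
  ∀ (x : B → ℝ) (a b : B), x b < x a → p x b < p x a

section QREDefs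

variable {N : Type} [Fintype N] [DecidableEq N] {A : N → Type}
  [∀ i, Fintype (A i)] [∀ i, DecidableEq (A i)]

/-- Quantal response equilibrium with respect to a profile of QRFs `p`. -/
def IsQRE (u : ∀ i : N, (∀ j, A j) → ℝ) (p : ∀ i, (A i → ℝ) → (A i → ℝ))
    (σ : ∀ i, A i → ℝ) : Prop :=
  ∀ i : N, σ i = p i (fun ai => devUtil u σ i ai)

/-- A sequence of profiles of QRFs is utility maximizing in the limit. -/
def UtilityMaximizingInLimit (u : ∀ i : N, (∀ j, A j) → ℝ)
    (p : ℕ → ∀ i, (A i → ℝ) → (A i → ℝ)) : Prop :=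
  ∀ (s : ℕ → ∀ i, A i → ℝ) (σ : ∀ i, A i → ℝ),
    (∀ n, IsQRE u (p n) (s n)) → ConvergesTo s σ → IsNash u σ

/-- `σ` is approachable by regular QRE that are utility maximizing in the limit. -/
def ApproachableByRegularQRE (u : ∀ i : N, (∀ j, A j) → ℝ) (σ : ∀ i, A i → ℝ) : Prop :=
  ∃ p : ℕ → ∀ i, (A i → ℝ) → (A i → ℝ),
    (∀ n i, IsRegularQRF (p n i)) ∧ UtilityMaximizingInLimit u p ∧
    ∃ s : ℕ → ∀ i, A i → ℝ, (∀ n, IsQRE u (p n) (s n)) ∧ ConvergesTo s σ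

end QREDefs

/-- A control cost function (van Damme), bundled with its derivative on `(0,1]`. -/
structure ControlCost where
  f : ℝ → ℝ
  f' : ℝ → ℝ
  hasDeriv : ∀ x ∈ Set.Ioc (0:ℝ) 1, HasDerivWithinAt f (f' x) (Set.Ioc (0:ℝ) 1) x
  contDeriv : ContinuousOn f' (Set.Ioc (0:ℝ) 1)
  anti : StrictAntiOn f (Set.Ioc (0:ℝ) 1)
  convex : StrictConvexOn ℝ (Set.Ioc (0:ℝ) 1) f
  atOne : f 1 = 0
  blowup : Tendsto f (nhdsWithin 0 (Set.Ioi (0:ℝ))) atTop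

section Aux
open Finset in
lemma abs_prod_sub_prod_le {ι : Type*} (s : Finset ι) (f g : ι → ℝ)
    (hf0 : ∀ i, 0 ≤ f i) (hf1 : ∀ i, f i ≤ 1) (hg0 : ∀ i, 0 ≤ g i) (hg1 : ∀ i, g i ≤ 1) :
    |∏ i ∈ s, f i - ∏ i ∈ s, g i| ≤ ∑ i ∈ s, |f i - g i| := by
  classical
  induction s using Finset.induction_on with
  | empty => simp
  | @insert a s ha ih =>
    rw [Finset.prod_insert ha, Finset.prod_insert ha, Finset.sum_insert ha]
    have hP0 : 0 ≤ ∏ i ∈ s, f i := Finset.prod_nonneg fun i _ => hf0 i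
    have hP1 : ∏ i ∈ s, f i ≤ 1 := Finset.prod_le_one (fun i _ => hf0 i) (fun i _ => hf1 i)
    have key : f a * ∏ i ∈ s, f i - g a * ∏ i ∈ s, g i
        = (f a - g a) * ∏ i ∈ s, f i + g a * (∏ i ∈ s, f i - ∏ i ∈ s, g i) := by ring
    rw [key]
    calc |(f a - g a) * ∏ i ∈ s, f i + g a * (∏ i ∈ s, f i - ∏ i ∈ s, g i)|
        ≤ |(f a - g a) * ∏ i ∈ s, f i| + |g a * (∏ i ∈ s, f i - ∏ i ∈ s, g i)| := abs_add_le _ _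
      _ ≤ |f a - g a| * 1 + 1 * |∏ i ∈ s, f i - ∏ i ∈ s, g i| := by
          rw [abs_mul, abs_mul]
          gcongr
          · rw [abs_of_nonneg hP0]; exact hP1
          · rw [abs_of_nonneg (hg0 a)]; exact hg1 a
      _ ≤ |f a - g a| + ∑ i ∈ s, |f i - g i| := by
          rw [mul_one, one_mul]; exact add_le_add (le_refl _) ih

end Aux

section Infra
variable {N : Type} [Fintype N] [DecidableEq N] {A : N → Type}
  [∀ i, Fintype (A i)] [∀ i, DecidableEq (A i)]

lemma strat_le_one {σ : ∀ i, A i → ℝ} (h : IsStrategy σ) (i : N) (a : A i) : σ i a ≤ 1 := by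
  have h2 := h.2 i
  calc σ i a ≤ ∑ b, σ i b := Finset.single_le_sum (fun b _ => h.1 i b) (Finset.mem_univ a)
    _ = 1 := h2

lemma upd01 {σ : ∀ i, A i → ℝ} (h : IsStrategy σ) (i : N) (ai : A i) (k : N) (b : A k) :
    0 ≤ (Function.update σ i (fun c => if c = ai then (1:ℝ) else 0)) k b ∧
      (Function.update σ i (fun c => if c = ai then (1:ℝ) else 0)) k b ≤ 1 := by
  rcases eq_or_ne k i with rfl | hk
  · rw [Function.update_self]
    split_ifs <;> norm_num
  · rw [Function.update_of_ne hk]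
    exact ⟨h.1 k b, strat_le_one h k b⟩

lemma devUtil_eq (u : ∀ i : N, (∀ j, A j) → ℝ) (σ : ∀ i, A i → ℝ) (i : N) (ai : A i) :
    devUtil u σ i ai = ∑ c : ∀ j, A j, u i c *
      ∏ k, Function.update σ i (fun b => if b = ai then (1:ℝ) else 0) k (c k) := rfl

lemma devUtil_abs_le (u : ∀ i : N, (∀ j, A j) → ℝ) {σ : ∀ i, A i → ℝ}
    (h : IsStrategy σ) (i : N) (ai : A i) :
    |devUtil u σ i ai| ≤ ∑ c : ∀ j, A j, |u i c| := by
  rw [devUtil_eq]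
  refine le_trans (Finset.abs_sum_le_sum_abs _ _) (Finset.sum_le_sum fun c _ => ?_)
  rw [abs_mul]
  have h0 : 0 ≤ ∏ k, Function.update σ i (fun b => if b = ai then (1:ℝ) else 0) k (c k) :=
    Finset.prod_nonneg fun k _ => (upd01 h i ai k (c k)).1
  have h1 : ∏ k, Function.update σ i (fun b => if b = ai then (1:ℝ) else 0) k (c k) ≤ 1 :=
    Finset.prod_le_one (fun k _ => (upd01 h i ai k (c k)).1) (fun k _ => (upd01 h i ai k (c k)).2)
  rw [abs_of_nonneg h0]
  calc |u i c| * _ ≤ |u i c| * 1 := by gcongr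
    _ = |u i c| := mul_one _

lemma devUtil_lip (u : ∀ i : N, (∀ j, A j) → ℝ) {σ τ : ∀ i, A i → ℝ}
    (hσ : IsStrategy σ) (hτ : IsStrategy τ) {e : ℝ}
    (he : ∀ k b, |σ k b - τ k b| ≤ e) (i : N) (ai : A i) :
    |devUtil u σ i ai - devUtil u τ i ai| ≤
      (∑ c : ∀ j, A j, |u i c|) * ((Fintype.card N : ℝ) * e) := by
  rw [devUtil_eq, devUtil_eq, ← Finset.sum_sub_distrib]
  have key : ∀ c : ∀ j, A j,
      |u i c * ∏ k, Function.update σ i (fun b => if b = ai then (1:ℝ) else 0) k (c k)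
        - u i c * ∏ k, Function.update τ i (fun b => if b = ai then (1:ℝ) else 0) k (c k)|
      ≤ |u i c| * ((Fintype.card N : ℝ) * e) := by
    intro c
    rw [← mul_sub, abs_mul]
    have hk : ∀ k : N, |Function.update σ i (fun b => if b = ai then (1:ℝ) else 0) k (c k)
        - Function.update τ i (fun b => if b = ai then (1:ℝ) else 0) k (c k)| ≤ e := by
      intro k
      rcases eq_or_ne k i with rfl | hki
      · rw [Function.update_self, Function.update_self, sub_self, abs_zero]
        exact le_trans (abs_nonneg _) (he k (c k))
      · rw [Function.update_of_ne hki, Function.update_of_ne hki]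
        exact he k (c k)
    have := abs_prod_sub_prod_le (Finset.univ : Finset N)
      (fun k => Function.update σ i (fun b => if b = ai then (1:ℝ) else 0) k (c k))
      (fun k => Function.update τ i (fun b => if b = ai then (1:ℝ) else 0) k (c k))
      (fun k => (upd01 hσ i ai k (c k)).1) (fun k => (upd01 hσ i ai k (c k)).2)
      (fun k => (upd01 hτ i ai k (c k)).1) (fun k => (upd01 hτ i ai k (c k)).2)
    have h2 : ∑ k : N, |Function.update σ i (fun b => if b = ai then (1:ℝ) else 0) k (c k)
        - Function.update τ i (fun b => if b = ai then (1:ℝ) else 0) k (c k)|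
        ≤ (Fintype.card N : ℝ) * e := by
      calc _ ≤ ∑ _k : N, e := Finset.sum_le_sum fun k _ => hk k
        _ = (Fintype.card N : ℝ) * e := by
            rw [Finset.sum_const, Finset.card_univ, nsmul_eq_mul]
    exact mul_le_mul_of_nonneg_left (le_trans this h2) (abs_nonneg _)
  calc |∑ c : ∀ j, A j, (u i c * _ - u i c * _)| ≤ ∑ c : ∀ j, A j, _ :=
        Finset.abs_sum_le_sum_abs _ _
    _ ≤ ∑ c : ∀ j, A j, |u i c| * ((Fintype.card N : ℝ) * e) := Finset.sum_le_sum fun c _ => key c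
    _ = (∑ c : ∀ j, A j, |u i c|) * ((Fintype.card N : ℝ) * e) := by rw [← Finset.sum_mul]

lemma isClosed_isStrategy : IsClosed {σ : ∀ i, A i → ℝ | IsStrategy σ} := by
  have hev : ∀ (i : N) (a : A i), Continuous fun σ : ∀ i, A i → ℝ => σ i a :=
    fun i a => (continuous_apply a).comp (continuous_apply i)
  have hset : {σ : ∀ i, A i → ℝ | IsStrategy σ}
      = (⋂ i, ⋂ a, {σ : ∀ i, A i → ℝ | 0 ≤ σ i a}) ∩ (⋂ i, {σ : ∀ i, A i → ℝ | ∑ a, σ i a = 1}) := by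
    ext σ
    simp only [IsStrategy, Set.mem_setOf_eq, Set.mem_inter_iff, Set.mem_iInter]
  rw [hset]
  exact (isClosed_iInter fun i => isClosed_iInter fun a =>
      isClosed_le continuous_const (hev i a)).inter
    (isClosed_iInter fun i => isClosed_eq (continuous_finset_sum _ fun a _ => hev i a)
      continuous_const)

end Infra

section Fmap
variable {N : Type} [Fintype N] [DecidableEq N] {A : N → Type}
  [∀ i, Fintype (A i)] [∀ i, DecidableEq (A i)]

/-- The perturbed-response map used in the Banach fixed-point construction. -/
noncomputable def Fmap (u : ∀ i : N, (∀ j, A j) → ℝ) (τ : ∀ i, A i → ℝ) (t CC : ℝ)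
    (ρ : ∀ i, A i → ℝ) : ∀ i, A i → ℝ :=
  fun j a => (τ j a + t * (CC + devUtil u ρ j a)) /
    (1 + t * ∑ a', (CC + devUtil u ρ j a'))

variable {u : ∀ i : N, (∀ j, A j) → ℝ} {τ : ∀ i, A i → ℝ} {t CC : ℝ} {ρ : ∀ i, A i → ℝ}

lemma Fmap_den_ge_one (ht0 : 0 ≤ t) (hCD : ∀ j a, 1 ≤ CC + devUtil u ρ j a) (j : N) :
    1 ≤ 1 + t * ∑ a', (CC + devUtil u ρ j a') := by
  have : 0 ≤ ∑ a', (CC + devUtil u ρ j a') :=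
    Finset.sum_nonneg fun a _ => le_trans zero_le_one (hCD j a)
  nlinarith

lemma Fmap_pos (hτ : IsStrategy τ) (ht0 : 0 < t)
    (hCD : ∀ j a, 1 ≤ CC + devUtil u ρ j a) (j : N) (a : A j) :
    0 < Fmap u τ t CC ρ j a := by
  have hden := Fmap_den_ge_one (u := u) ht0.le hCD j
  have hnum : 0 < τ j a + t * (CC + devUtil u ρ j a) := by
    have := hτ.1 j a
    nlinarith [hCD j a]
  exact div_pos hnum (lt_of_lt_of_le one_pos hden)

lemma Fmap_isStrategy (hτ : IsStrategy τ) (ht0 : 0 < t)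
    (hCD : ∀ j a, 1 ≤ CC + devUtil u ρ j a) : IsStrategy (Fmap u τ t CC ρ) := by
  constructor
  · exact fun j a => (Fmap_pos hτ ht0 hCD j a).le
  · intro j
    have hden := Fmap_den_ge_one (u := u) ht0.le hCD j
    have hd0 : (1 + t * ∑ a', (CC + devUtil u ρ j a')) ≠ 0 := by linarith
    unfold Fmap
    rw [← Finset.sum_div]
    rw [Finset.sum_add_distrib, ← Finset.mul_sum, hτ.2 j]
    exact div_self hd0

/-- comparing coordinates of `Fmap` reduces to comparing perturbed payoffs. -/
lemma Fmap_le_iff (ht0 : 0 < t)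
    (hCD : ∀ j a, 1 ≤ CC + devUtil u ρ j a) (j : N) (a b : A j) :
    Fmap u τ t CC ρ j b ≤ Fmap u τ t CC ρ j a ↔
      τ j b + t * devUtil u ρ j b ≤ τ j a + t * devUtil u ρ j a := by
  have hden := Fmap_den_ge_one (u := u) ht0.le hCD j
  have hdpos : 0 < 1 + t * ∑ a', (CC + devUtil u ρ j a') := lt_of_lt_of_le one_pos hden
  unfold Fmap
  rw [div_le_div_iff_of_pos_right hdpos]
  constructor <;> intro h <;> nlinarith

lemma Fmap_close (hτ : IsStrategy τ) (ht0 : 0 < t) {Bd Am : ℝ}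
    (hCD : ∀ j a, 1 ≤ CC + devUtil u ρ j a)
    (hCD2 : ∀ j a, CC + devUtil u ρ j a ≤ Bd)
    (hAm : ∀ j : N, (Fintype.card (A j) : ℝ) ≤ Am) (j : N) (a : A j) :
    |Fmap u τ t CC ρ j a - τ j a| ≤ t * (Bd + Am * Bd) := by
  have hden := Fmap_den_ge_one (u := u) ht0.le hCD j
  have hdpos : 0 < 1 + t * ∑ a', (CC + devUtil u ρ j a') := lt_of_lt_of_le one_pos hden
  have hBd1 : (1:ℝ) ≤ Bd := le_trans (hCD j a) (hCD2 j a)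
  have hsum0 : 0 ≤ ∑ a', (CC + devUtil u ρ j a') :=
    Finset.sum_nonneg fun a' _ => le_trans zero_le_one (hCD j a')
  have hsum : ∑ a', (CC + devUtil u ρ j a') ≤ Am * Bd := by
    calc ∑ a', (CC + devUtil u ρ j a') ≤ ∑ _a' : A j, Bd :=
          Finset.sum_le_sum fun a' _ => hCD2 j a'
      _ = (Fintype.card (A j) : ℝ) * Bd := by
          rw [Finset.sum_const, Finset.card_univ, nsmul_eq_mul]
      _ ≤ Am * Bd := by
          have : (0:ℝ) ≤ Fintype.card (A j) := Nat.cast_nonneg _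
          nlinarith [hAm j]
  have hkey : Fmap u τ t CC ρ j a - τ j a =
      (t * ((CC + devUtil u ρ j a) - τ j a * ∑ a', (CC + devUtil u ρ j a'))) /
        (1 + t * ∑ a', (CC + devUtil u ρ j a')) := by
    unfold Fmap
    field_simp
    ring
  rw [hkey, abs_div, abs_of_pos hdpos]
  have hτ01 : 0 ≤ τ j a ∧ τ j a ≤ 1 := ⟨hτ.1 j a, strat_le_one hτ j a⟩
  have hnum : |t * ((CC + devUtil u ρ j a) - τ j a * ∑ a', (CC + devUtil u ρ j a'))|
      ≤ t * (Bd + Am * Bd) := by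
    rw [abs_mul, abs_of_pos ht0]
    have h2 : |(CC + devUtil u ρ j a) - τ j a * ∑ a', (CC + devUtil u ρ j a')|
        ≤ Bd + Am * Bd := by
      rw [abs_le]
      constructor
      · have : τ j a * ∑ a', (CC + devUtil u ρ j a') ≤ 1 * (Am * Bd) := by
          nlinarith [hτ01.1, hτ01.2]
        nlinarith [hCD j a]
      · have : 0 ≤ τ j a * ∑ a', (CC + devUtil u ρ j a') := mul_nonneg hτ01.1 hsum0
        nlinarith [hCD2 j a]
    exact mul_le_mul_of_nonneg_left h2 ht0.le
  calc _ ≤ |t * ((CC + devUtil u ρ j a) - τ j a * ∑ a', (CC + devUtil u ρ j a'))| := by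
        apply div_le_self (abs_nonneg _) hden
    _ ≤ t * (Bd + Am * Bd) := hnum

lemma Fmap_lip (hτ : IsStrategy τ) (ht0 : 0 < t) (ht1 : t ≤ 1) {ρ' : ∀ i, A i → ℝ}
    {Bd Am ed : ℝ} (hed : 0 ≤ ed)
    (hCD : ∀ j a, 1 ≤ CC + devUtil u ρ j a)
    (hCD' : ∀ j a, 1 ≤ CC + devUtil u ρ' j a)
    (hCD2' : ∀ j a, CC + devUtil u ρ' j a ≤ Bd)
    (hAm : ∀ j : N, (Fintype.card (A j) : ℝ) ≤ Am)
    (hdev : ∀ j a, |devUtil u ρ j a - devUtil u ρ' j a| ≤ ed) (j : N) (a : A j) :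
    |Fmap u τ t CC ρ j a - Fmap u τ t CC ρ' j a| ≤ t * ed * (1 + (1 + Bd) * Am) := by
  have hden := Fmap_den_ge_one (u := u) ht0.le hCD j
  have hden' := Fmap_den_ge_one (u := u) (ρ := ρ') ht0.le hCD' j
  set n : ℝ := τ j a + t * (CC + devUtil u ρ j a) with hn
  set n' : ℝ := τ j a + t * (CC + devUtil u ρ' j a) with hn'
  set d : ℝ := 1 + t * ∑ a', (CC + devUtil u ρ j a') with hd
  set d' : ℝ := 1 + t * ∑ a', (CC + devUtil u ρ' j a') with hd'
  have hdpos : 0 < d := lt_of_lt_of_le one_pos hden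
  have hdpos' : 0 < d' := lt_of_lt_of_le one_pos hden'
  have hAm0 : (0:ℝ) ≤ Am := by
    have : (0:ℝ) ≤ Fintype.card (A j) := Nat.cast_nonneg _
    linarith [hAm j]
  have hn'ub : n' ≤ 1 + Bd := by
    have := strat_le_one hτ j a
    nlinarith [hCD2' j a, hCD' j a]
  have hn'0 : 0 ≤ n' := by
    have := hτ.1 j a
    nlinarith [hCD' j a]
  have hnsub : |n - n'| ≤ t * ed := by
    have : n - n' = t * (devUtil u ρ j a - devUtil u ρ' j a) := by rw [hn, hn']; ring
    rw [this, abs_mul, abs_of_pos ht0]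
    exact mul_le_mul_of_nonneg_left (hdev j a) ht0.le
  have hdsub : |d - d'| ≤ t * (Am * ed) := by
    have hs : (∑ a', (CC + devUtil u ρ j a')) - (∑ a', (CC + devUtil u ρ' j a'))
        = ∑ a', (devUtil u ρ j a' - devUtil u ρ' j a') := by
      rw [← Finset.sum_sub_distrib]
      exact Finset.sum_congr rfl fun x _ => by ring
    have h1 : d - d' = t * ∑ a', (devUtil u ρ j a' - devUtil u ρ' j a') := by
      rw [← hs, hd, hd']
      ring
    rw [h1, abs_mul, abs_of_pos ht0]
    have h2 : |∑ a', (devUtil u ρ j a' - devUtil u ρ' j a')| ≤ Am * ed := by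
      calc |∑ a', (devUtil u ρ j a' - devUtil u ρ' j a')|
          ≤ ∑ a', |devUtil u ρ j a' - devUtil u ρ' j a'| := Finset.abs_sum_le_sum_abs _ _
        _ ≤ ∑ _a' : A j, ed := Finset.sum_le_sum fun a' _ => hdev j a'
        _ = (Fintype.card (A j) : ℝ) * ed := by
            rw [Finset.sum_const, Finset.card_univ, nsmul_eq_mul]
        _ ≤ Am * ed := mul_le_mul_of_nonneg_right (hAm j) hed
    exact mul_le_mul_of_nonneg_left h2 ht0.le
  have hid : Fmap u τ t CC ρ j a - Fmap u τ t CC ρ' j a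
      = (n - n') / d + n' * ((d' - d) / (d * d')) := by
    show n / d - n' / d' = _
    field_simp
    ring
  rw [hid]
  have h1 : |(n - n') / d| ≤ t * ed := by
    rw [abs_div, abs_of_pos hdpos]
    exact le_trans (div_le_self (abs_nonneg _) hden) hnsub
  have h2 : |n' * ((d' - d) / (d * d'))| ≤ (1 + Bd) * (t * (Am * ed)) := by
    rw [abs_mul, abs_div, abs_of_pos (mul_pos hdpos hdpos'), abs_of_nonneg hn'0]
    have hdd' : 1 ≤ d * d' := by nlinarith
    have : |d' - d| / (d * d') ≤ |d - d'| := by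
      rw [abs_sub_comm]
      exact div_le_self (abs_nonneg _) hdd'
    have h3 : |d' - d| / (d * d') ≤ t * (Am * ed) := le_trans this hdsub
    apply mul_le_mul hn'ub h3 (by positivity) (by nlinarith)
  calc |(n - n') / d + n' * ((d' - d) / (d * d'))|
      ≤ |(n - n') / d| + |n' * ((d' - d) / (d * d'))| := abs_add_le _ _
    _ ≤ t * ed + (1 + Bd) * (t * (Am * ed)) := add_le_add h1 h2
    _ = t * ed * (1 + (1 + Bd) * Am) := by ring

end Fmap

section Key
variable {N : Type} [Fintype N] [DecidableEq N] {A : N → Type}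
  [∀ i, Fintype (A i)] [∀ i, DecidableEq (A i)] [∀ i, Nonempty (A i)]

set_option maxHeartbeats 1000000 in
lemma key_approx (u : ∀ i : N, (∀ j, A j) → ℝ) {τ : ∀ i, A i → ℝ}
    (hτ : WeaklyPayoffMonotone u τ) {ε : ℝ} (hε : 0 < ε) :
    ∃ ρ : ∀ i, A i → ℝ, Interior ρ ∧ PayoffMonotone u ρ ∧ ∀ i a, |ρ i a - τ i a| ≤ ε := by
  classical
  obtain ⟨hτS, hτW⟩ := hτ
  -- constants
  set C0 : ℝ := (∑ j, ∑ c : ∀ k, A k, |u j c|) + 1 with hC0def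
  have hC0 : (1:ℝ) ≤ C0 := by
    have : (0:ℝ) ≤ ∑ j, ∑ c : ∀ k, A k, |u j c| :=
      Finset.sum_nonneg fun j _ => Finset.sum_nonneg fun c _ => abs_nonneg _
    simp only [hC0def]; linarith
  have hDbound : ∀ ρ : ∀ i, A i → ℝ, IsStrategy ρ → ∀ j a, |devUtil u ρ j a| ≤ C0 := by
    intro ρ hρ j a
    refine le_trans (devUtil_abs_le u hρ j a) ?_
    have h1 : (∑ c : ∀ k, A k, |u j c|) ≤ ∑ j', ∑ c : ∀ k, A k, |u j' c| :=
      Finset.single_le_sum (f := fun j' => ∑ c : ∀ k, A k, |u j' c|)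
        (fun j' _ => Finset.sum_nonneg fun c _ => abs_nonneg _) (Finset.mem_univ j)
    simp only [hC0def]; linarith
  set CC : ℝ := C0 + 1 with hCCdef
  have hCD : ∀ ρ : ∀ i, A i → ℝ, IsStrategy ρ → ∀ j a, 1 ≤ CC + devUtil u ρ j a := by
    intro ρ hρ j a
    have := abs_le.mp (hDbound ρ hρ j a)
    simp only [hCCdef]; linarith [this.1]
  have hCD2 : ∀ ρ : ∀ i, A i → ℝ, IsStrategy ρ → ∀ j a, CC + devUtil u ρ j a ≤ 2 * C0 + 1 := by
    intro ρ hρ j a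
    have := abs_le.mp (hDbound ρ hρ j a)
    simp only [hCCdef]; linarith [this.2]
  set L : ℝ := C0 * (Fintype.card N : ℝ) with hLdef
  have hL0 : 0 ≤ L := by
    have : (0:ℝ) ≤ (Fintype.card N : ℝ) := Nat.cast_nonneg _
    simp only [hLdef]; nlinarith
  have hlip : ∀ (ρ ρ' : ∀ i, A i → ℝ), IsStrategy ρ → IsStrategy ρ' → ∀ e, 0 ≤ e →
      (∀ k b, |ρ k b - ρ' k b| ≤ e) → ∀ j a,
      |devUtil u ρ j a - devUtil u ρ' j a| ≤ L * e := by
    intro ρ ρ' hρ hρ' e he hcl j a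
    refine le_trans (devUtil_lip u hρ hρ' hcl j a) ?_
    have h1 : (∑ c : ∀ k, A k, |u j c|) ≤ C0 := by
      have : (∑ c : ∀ k, A k, |u j c|) ≤ ∑ j', ∑ c : ∀ k, A k, |u j' c| :=
        Finset.single_le_sum (f := fun j' => ∑ c : ∀ k, A k, |u j' c|)
          (fun j' _ => Finset.sum_nonneg fun c _ => abs_nonneg _) (Finset.mem_univ j)
      simp only [hC0def]; linarith
    have h0 : (0:ℝ) ≤ (Fintype.card N : ℝ) * e :=
      mul_nonneg (Nat.cast_nonneg _) he
    have h2 : (0:ℝ) ≤ ∑ c : ∀ k, A k, |u j c| :=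
      Finset.sum_nonneg fun c _ => abs_nonneg _
    calc (∑ c : ∀ k, A k, |u j c|) * ((Fintype.card N : ℝ) * e)
        ≤ C0 * ((Fintype.card N : ℝ) * e) := mul_le_mul_of_nonneg_right h1 h0
      _ = L * e := by rw [hLdef]; ring
  set Am : ℝ := ∑ j : N, (Fintype.card (A j) : ℝ) with hAmdef
  have hAm : ∀ j : N, (Fintype.card (A j) : ℝ) ≤ Am :=
    fun j => Finset.single_le_sum (f := fun j' => (Fintype.card (A j') : ℝ))
      (fun j' _ => Nat.cast_nonneg _) (Finset.mem_univ j)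
  have hAm0 : 0 ≤ Am := Finset.sum_nonneg fun j _ => Nat.cast_nonneg _
  set Bd : ℝ := 2 * C0 + 1 with hBddef
  have hBd0 : 0 ≤ Bd := by simp only [hBddef]; linarith
  set Kk : ℝ := L * (1 + (1 + Bd) * Am) with hKkdef
  have hKk0 : 0 ≤ Kk := by
    rw [hKkdef]
    apply mul_nonneg hL0
    nlinarith
  set M : ℝ := Bd + Am * Bd with hMdef
  have hM0 : 0 ≤ M := by simp only [hMdef]; nlinarith
  -- the gap δ
  obtain ⟨δ, hδ0, hδ⟩ : ∃ δ, 0 < δ ∧ ∀ (j : N) (a b : A j), τ j b < τ j a →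
      δ ≤ min (τ j a - τ j b) (devUtil u τ j a - devUtil u τ j b) := by
    set T := (j : N) × (A j × A j) with hT
    set s : Finset T := Finset.univ.filter (fun p => τ p.1 p.2.2 < τ p.1 p.2.1) with hs
    set f : T → ℝ := fun p => min (τ p.1 p.2.1 - τ p.1 p.2.2)
      (devUtil u τ p.1 p.2.1 - devUtil u τ p.1 p.2.2) with hf
    by_cases hne : s.Nonempty
    · refine ⟨s.inf' hne f, ?_, ?_⟩
      · rw [Finset.lt_inf'_iff]
        intro p hp
        have hlt : τ p.1 p.2.2 < τ p.1 p.2.1 := (Finset.mem_filter.mp hp).2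
        have hd := hτW p.1 p.2.1 p.2.2 hlt
        simp only [hf, lt_min_iff]
        constructor <;> linarith
      · intro j a b hlt
        have hmem : (⟨j, (a, b)⟩ : T) ∈ s := by
          rw [hs, Finset.mem_filter]
          exact ⟨Finset.mem_univ _, hlt⟩
        exact Finset.inf'_le f hmem
    · refine ⟨1, one_pos, fun j a b hlt => absurd ?_ hne⟩
      exact ⟨⟨j, (a, b)⟩, by rw [hs, Finset.mem_filter]; exact ⟨Finset.mem_univ _, hlt⟩⟩
  -- choice of t
  set t : ℝ := min (min (1/2) (1/(2*Kk+2))) (min (δ/(2*L*M+2*C0+2)) (ε/(M+1))) with htdef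
  have ht0 : 0 < t := by
    rw [htdef]
    refine lt_min (lt_min (by norm_num) ?_) (lt_min ?_ ?_)
    · exact div_pos one_pos (by linarith)
    · exact div_pos hδ0 (by nlinarith)
    · exact div_pos hε (by linarith)
  have ht1 : t ≤ 1 := le_trans (le_trans (min_le_left _ _) (min_le_left _ _)) (by norm_num)
  have htK : t * Kk ≤ 1/2 := by
    have h1 : t ≤ 1/(2*Kk+2) := le_trans (min_le_left _ _) (min_le_right _ _)
    have h2 : 0 < 2*Kk+2 := by linarith
    have h3 : t * (2*Kk+2) ≤ 1 := (le_div_iff₀ h2).mp h1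
    nlinarith
  have htδ : t * (2*L*M+2*C0+2) ≤ δ := by
    have h1 : t ≤ δ/(2*L*M+2*C0+2) := le_trans (min_le_right _ _) (min_le_left _ _)
    have h2 : (0:ℝ) < 2*L*M+2*C0+2 := by nlinarith
    exact (le_div_iff₀ h2).mp h1
  have htδ1 : 2*(L*(M*t)) < δ := by nlinarith
  have htδ2 : 2*(C0*t) < δ := by
    have hLM : 0 ≤ t * (L * M) := mul_nonneg ht0.le (mul_nonneg hL0 hM0)
    nlinarith
  have htε : M * t ≤ ε := by
    have h1 : t ≤ ε/(M+1) := le_trans (min_le_right _ _) (min_le_right _ _)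
    have h2 : (0:ℝ) < M+1 := by linarith
    have h3 : t * (M+1) ≤ ε := (le_div_iff₀ h2).mp h1
    nlinarith
  clear_value C0 CC L Am Bd Kk M t
  -- the fixed point space
  haveI hSne : Nonempty {σ : ∀ i, A i → ℝ | IsStrategy σ} := ⟨⟨τ, hτS⟩⟩
  haveI hScomp : CompleteSpace {σ : ∀ i, A i → ℝ | IsStrategy σ} :=
    (isClosed_isStrategy (N := N) (A := A)).completeSpace_coe
  set G : {σ : ∀ i, A i → ℝ | IsStrategy σ} → {σ : ∀ i, A i → ℝ | IsStrategy σ} :=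
    fun ρ => ⟨Fmap u τ t CC ρ.1, Fmap_isStrategy hτS ht0 (hCD ρ.1 ρ.2)⟩ with hGdef
  have hGlip : ∀ x y, dist (G x) (G y) ≤ (t * Kk) * dist x y := by
    intro x y
    rw [Subtype.dist_eq]
    have hd0 : (0:ℝ) ≤ dist x y := dist_nonneg
    have hbd : (0:ℝ) ≤ t * Kk * dist x y := mul_nonneg (mul_nonneg ht0.le hKk0) hd0
    rw [dist_pi_le_iff hbd]
    intro j
    rw [dist_pi_le_iff hbd]
    intro a
    rw [Real.dist_eq]
    have hcl : ∀ k b, |x.1 k b - y.1 k b| ≤ dist x y := by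
      intro k b
      rw [← Real.dist_eq]
      calc dist (x.1 k b) (y.1 k b) ≤ dist (x.1 k) (y.1 k) := dist_le_pi_dist _ _ b
        _ ≤ dist x.1 y.1 := dist_le_pi_dist _ _ k
        _ = dist x y := (Subtype.dist_eq x y).symm
    have hdev : ∀ j a, |devUtil u x.1 j a - devUtil u y.1 j a| ≤ L * dist x y :=
      hlip x.1 y.1 x.2 y.2 (dist x y) hd0 hcl
    have := Fmap_lip (ρ := x.1) (ρ' := y.1) (Bd := Bd) (Am := Am) (ed := L * dist x y)
      hτS ht0 ht1 (mul_nonneg hL0 hd0) (hCD x.1 x.2) (hCD y.1 y.2) (hCD2 y.1 y.2) hAm hdev j a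
    calc |Fmap u τ t CC x.1 j a - Fmap u τ t CC y.1 j a|
        ≤ t * (L * dist x y) * (1 + (1 + Bd) * Am) := this
      _ = t * Kk * dist x y := by rw [hKkdef]; ring
  have hcontr : ContractingWith (Real.toNNReal (t * Kk)) G := by
    constructor
    · rw [← NNReal.coe_lt_coe, NNReal.coe_one, Real.coe_toNNReal _ (mul_nonneg ht0.le hKk0)]
      linarith
    · exact LipschitzWith.of_dist_le_mul fun x y => by
        rw [Real.coe_toNNReal _ (mul_nonneg ht0.le hKk0)]
        exact hGlip x y
  set rhat := hcontr.fixedPoint G with hrhat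
  have hfix : G rhat = rhat := hcontr.fixedPoint_isFixedPt
  set ρ : ∀ i, A i → ℝ := rhat.1 with hρdef
  have hρS : IsStrategy ρ := rhat.2
  have hFρ : Fmap u τ t CC ρ = ρ := congrArg Subtype.val hfix
  -- interiority
  have hInt : Interior ρ := by
    intro j a
    rw [← hFρ]
    exact Fmap_pos hτS ht0 (hCD ρ hρS) j a
  -- closeness
  have hclose : ∀ k b, |ρ k b - τ k b| ≤ M * t := by
    intro k b
    rw [← hFρ]
    calc |Fmap u τ t CC ρ k b - τ k b| ≤ t * (Bd + Am * Bd) :=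
          Fmap_close hτS ht0 (hCD ρ hρS) (hCD2 ρ hρS) hAm k b
      _ = M * t := by rw [hMdef]; ring
  have hdevclose : ∀ j a, |devUtil u ρ j a - devUtil u τ j a| ≤ L * (M * t) :=
    hlip ρ τ hρS hτS (M * t) (mul_nonneg hM0 ht0.le) hclose
  -- payoff monotonicity
  have hkey : ∀ (j : N) (a b : A j), ρ j b ≤ ρ j a ↔
      τ j b + t * devUtil u ρ j b ≤ τ j a + t * devUtil u ρ j a := by
    intro j a b
    have h := Fmap_le_iff (τ := τ) ht0 (hCD ρ hρS) j a b
    rwa [hFρ] at h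
  have hstrict : ∀ (j : N) (a b : A j), τ j b < τ j a →
      devUtil u ρ j b < devUtil u ρ j a ∧
        τ j b + t * devUtil u ρ j b < τ j a + t * devUtil u ρ j a := by
    intro j a b hlt
    have hg := le_min_iff.mp (hδ j a b hlt)
    have hDa2 := abs_le.mp (hdevclose j a)
    have hDb2 := abs_le.mp (hdevclose j b)
    constructor
    · linarith [hg.2, hDa2.1, hDb2.2, htδ1]
    · have hub := abs_le.mp (hDbound ρ hρS j b)
      have hlb := abs_le.mp (hDbound ρ hρS j a)
      have h1 : t * devUtil u ρ j b ≤ t * C0 :=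
        mul_le_mul_of_nonneg_left hub.2 ht0.le
      have h2 : -(t * C0) ≤ t * devUtil u ρ j a := by
        have := mul_le_mul_of_nonneg_left hlb.1 ht0.le
        linarith
      have : 2*(C0*t) < τ j a - τ j b := by linarith [hg.1, htδ2]
      linarith
  have hMon : PayoffMonotone u ρ := by
    refine ⟨hρS, fun j a b => ?_⟩
    rcases lt_trichotomy (τ j a) (τ j b) with hlt | heq | hgt
    · obtain ⟨hD, hP⟩ := hstrict j b a hlt
      refine iff_of_false (fun h => ?_) (not_le.mpr hD)
      exact absurd ((hkey j a b).mp h) (not_le.mpr hP)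
    · constructor
      · intro h
        have h2 := (hkey j a b).mp h
        have h3 : t * devUtil u ρ j b ≤ t * devUtil u ρ j a := by linarith
        exact le_of_mul_le_mul_left h3 ht0
      · intro h
        refine (hkey j a b).mpr ?_
        have h3 : t * devUtil u ρ j b ≤ t * devUtil u ρ j a :=
          mul_le_mul_of_nonneg_left h ht0.le
        linarith
    · obtain ⟨hD, hP⟩ := hstrict j a b hgt
      exact iff_of_true ((hkey j a b).mpr hP.le) hD.le
  exact ⟨ρ, hInt, hMon, fun i a => le_trans (hclose i a) htε⟩

end Key

/-- empirical equilibria are exactly the Nash equilibria that are limits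
of interior payoff monotone profiles. -/
theorem empirical_iff_interior_payoff_monotone_limit {N : Type} [Fintype N] [DecidableEq N] {A : N → Type}
    [∀ i, Fintype (A i)] [∀ i, DecidableEq (A i)] [∀ i, Nonempty (A i)]
    (u : ∀ i : N, (∀ j, A j) → ℝ) (σ : ∀ i, A i → ℝ) :
    IsEmpirical u σ ↔
      (IsNash u σ ∧ ∃ s : ℕ → ∀ i, A i → ℝ,
        (∀ n, Interior (s n) ∧ PayoffMonotone u (s n)) ∧ ConvergesTo s σ) := by
  constructor
  · rintro ⟨hN, s, hws, hconv⟩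
    refine ⟨hN, ?_⟩
    have H : ∀ n : ℕ, ∃ ρ : ∀ i, A i → ℝ, Interior ρ ∧ PayoffMonotone u ρ ∧
        ∀ i a, |ρ i a - s n i a| ≤ 1/((n:ℝ)+1) := fun n =>
      key_approx u (hws n) (by positivity)
    choose ρ hInt hMon hCl using H
    refine ⟨ρ, fun n => ⟨hInt n, hMon n⟩, ?_⟩
    intro i a
    rw [tendsto_iff_dist_tendsto_zero]
    have hbound : ∀ n : ℕ, dist (ρ n i a) (σ i a) ≤ 1/((n:ℝ)+1) + dist (s n i a) (σ i a) := by
      intro n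
      calc dist (ρ n i a) (σ i a)
          ≤ dist (ρ n i a) (s n i a) + dist (s n i a) (σ i a) := dist_triangle _ _ _
        _ ≤ 1/((n:ℝ)+1) + dist (s n i a) (σ i a) := by
            have h := hCl n i a
            rw [Real.dist_eq]
            gcongr
    have hg : Filter.Tendsto (fun n : ℕ => 1/((n:ℝ)+1) + dist (s n i a) (σ i a))
        Filter.atTop (nhds 0) := by
      have h1 : Filter.Tendsto (fun n : ℕ => 1 / ((n : ℝ) + 1)) Filter.atTop (nhds 0) :=
        tendsto_one_div_add_atTop_nhds_zero_nat
      have h2 := (tendsto_iff_dist_tendsto_zero).mp (hconv i a)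
      simpa using h1.add h2
    exact squeeze_zero (fun n => dist_nonneg) hbound hg
  · rintro ⟨hN, s, h, hconv⟩
    refine ⟨hN, s, fun n => ⟨(h n).2.1, fun i ai bi hlt => ?_⟩, hconv⟩
    by_contra hcon
    push_neg at hcon
    exact absurd (((h n).2.2 i bi ai).mpr hcon) (not_le.mpr hlt)
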